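/- arXiv:1510.03521 — 3 statements merged into one kernel-verified Lean document; each statement's English description precedes it below -/
import Mathlib

section
/- Let β, ζ, h be nonnegative functions on (0,∞) with ζ, h locally integrable, β absolutely continuous on (0,∞), and suppose β'(t) ≤ ζ(t)β(t) + h(t) for almost every t > 0. If there exist a finite time t₁ > 0, a number q > 0, and nonnegative constants A, B, C such that for every t > t₁ one has ∫_t^{t+q} ζ(τ)dτ ≤ A, ∫_t^{t+q} β(τ)dτ ≤ B, and ∫_t^{t+q} h(τ)dτ ≤ C, then β(t) ≤ (B/q + C)·e^A for every t > t₁ + q. -/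
open MeasureTheory intervalIntegral

open Set Filter

lemma gronwall_key (ζ : ℝ → ℝ) (s t : ℝ) (hst : s ≤ t)
    (hζi : IntegrableOn ζ (Icc s t))
    (hζnn : ∀ τ ∈ Icc s t, 0 ≤ ζ τ) :
    (∫ τ in s..t, ζ τ * Real.exp (∫ σ in s..τ, ζ σ))
      ≤ Real.exp (∫ σ in s..t, ζ σ) - 1 := by
  set G : ℝ → ℝ := fun u => ∫ σ in s..u, ζ σ with hGdef
  -- interval integrability of ζ between points of Icc s t
  have ii : ∀ u ∈ Icc s t, ∀ v ∈ Icc s t, IntervalIntegrable ζ volume u v := by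
    intro u hu v hv
    exact (hζi.mono_set (uIcc_subset_Icc hu hv)).intervalIntegrable
  have hGadd : ∀ u ∈ Icc s t, ∀ v ∈ Icc s t, G v - G u = ∫ τ in u..v, ζ τ := by
    intro u hu v hv
    have := integral_add_adjacent_intervals (ii s (left_mem_Icc.2 hst) u hu)
      (ii u hu v hv)
    simp only [hGdef]
    linarith
  have hGs : G s = 0 := by simp [hGdef]
  have hGmono : ∀ u ∈ Icc s t, ∀ v ∈ Icc s t, u ≤ v → G u ≤ G v := by
    intro u hu v hv huv
    have h1 : G v - G u = ∫ τ in u..v, ζ τ := hGadd u hu v hv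
    have h2 : 0 ≤ ∫ τ in u..v, ζ τ := by
      apply integral_nonneg huv
      intro x hx
      exact hζnn x ⟨le_trans hu.1 hx.1, le_trans hx.2 hv.2⟩
    linarith
  have hGnn : ∀ u ∈ Icc s t, 0 ≤ G u := by
    intro u hu
    have := hGmono s (left_mem_Icc.2 hst) u hu hu.1
    simpa [hGs] using this
  have hGcont : ContinuousOn G (Icc s t) := by
    have := continuousOn_primitive_interval (a := s) (b := t) (f := ζ) (μ := volume)
      (by rwa [uIcc_of_le hst])
    rwa [uIcc_of_le hst] at this
  have hGtnn : 0 ≤ G t := hGnn t (right_mem_Icc.2 hst)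
  -- integrability of ζ * exp ∘ G
  have hfi : IntegrableOn (fun τ => ζ τ * Real.exp (G τ)) (Icc s t) :=
    hζi.mul_continuousOn (Real.continuous_exp.comp_continuousOn hGcont) isCompact_Icc
  -- per-piece bound
  have piece : ∀ δ : ℝ, 0 ≤ δ → ∀ a ∈ Icc s t, ∀ b ∈ Icc s t, a ≤ b → G b - G a ≤ δ →
      (∫ τ in a..b, ζ τ * Real.exp (G τ))
        ≤ Real.exp δ * (Real.exp (G b) - Real.exp (G a)) := by
    intro δ hδ a ha b hb hab hGab
    have h1 : (∫ τ in a..b, ζ τ * Real.exp (G τ)) ≤ ∫ τ in a..b, ζ τ * Real.exp (G b) := by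
      apply integral_mono_on hab
      · exact (hfi.mono_set (by rw [uIcc_of_le hab]; exact Icc_subset_Icc ha.1 hb.2)).intervalIntegrable
      · exact (ii a ha b hb).mul_const _
      · intro x hx
        have hxm : x ∈ Icc s t := ⟨le_trans ha.1 hx.1, le_trans hx.2 hb.2⟩
        exact mul_le_mul_of_nonneg_left
          (Real.exp_le_exp.2 (hGmono x hxm b hb hx.2)) (hζnn x hxm)
    have h2 : (∫ τ in a..b, ζ τ * Real.exp (G b)) = (G b - G a) * Real.exp (G b) := by
      rw [intervalIntegral.integral_mul_const, ← hGadd a ha b hb]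
    rw [h2] at h1
    refine h1.trans ?_
    -- (G b - G a) * exp (G b) ≤ exp δ * (exp (G b) - exp (G a))
    have hx0 : 0 ≤ G b - G a := by
      have := hGmono a ha b hb hab; linarith
    have e1 : G b - G a + 1 ≤ Real.exp (G b - G a) := Real.add_one_le_exp _
    have e2 : Real.exp (G b - G a) ≤ Real.exp δ := Real.exp_le_exp.2 hGab
    have e3 : (0:ℝ) < Real.exp (G a) := Real.exp_pos _
    have e4 : Real.exp (G b) = Real.exp (G a) * Real.exp (G b - G a) := by
      rw [← Real.exp_add]; ring_nf
    have key : (G b - G a) * Real.exp (G b - G a)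
        ≤ Real.exp δ * (Real.exp (G b - G a) - 1) := by
      have h5 : (G b - G a) * Real.exp (G b - G a)
          ≤ (Real.exp (G b - G a) - 1) * Real.exp (G b - G a) :=
        mul_le_mul_of_nonneg_right (by linarith) (Real.exp_pos _).le
      have h6 : (Real.exp (G b - G a) - 1) * Real.exp (G b - G a)
          ≤ (Real.exp (G b - G a) - 1) * Real.exp δ :=
        mul_le_mul_of_nonneg_left e2 (by linarith)
      nlinarith
    calc (G b - G a) * Real.exp (G b)
        = Real.exp (G a) * ((G b - G a) * Real.exp (G b - G a)) := by rw [e4]; ring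
      _ ≤ Real.exp (G a) * (Real.exp δ * (Real.exp (G b - G a) - 1)) :=
          mul_le_mul_of_nonneg_left key e3.le
      _ = Real.exp δ * (Real.exp (G b) - Real.exp (G a)) := by rw [e4]; ring
  -- partition argument
  have main : ∀ n : ℕ,
      (∫ τ in s..t, ζ τ * Real.exp (G τ))
        ≤ Real.exp ((G t + 1) / (n + 1)) * (Real.exp (G t) - 1) := by
    intro n
    set δ : ℝ := (G t + 1) / (n + 1) with hδdef
    have hδpos : 0 < δ := by positivity
    -- the partition points
    set S : ℕ → Set ℝ := fun i => {τ ∈ Icc s t | min (i * δ) (G t) ≤ G τ} with hSdef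
    set u : ℕ → ℝ := fun i => sInf (S i) with hudef
    have hSne : ∀ i, (S i).Nonempty := fun i => ⟨t, right_mem_Icc.2 hst, min_le_right _ _⟩
    have hSbdd : ∀ i, BddBelow (S i) := fun i => ⟨s, fun x hx => hx.1.1⟩
    have hSclosed : ∀ i, IsClosed (S i) := by
      intro i
      have : S i = Icc s t ∩ G ⁻¹' (Ici (min (i * δ) (G t))) := by
        ext x; simp [hSdef, and_comm]
      rw [this]
      exact hGcont.preimage_isClosed_of_isClosed isClosed_Icc isClosed_Ici
    have humem : ∀ i, u i ∈ S i := fun i => (hSclosed i).csInf_mem (hSne i) (hSbdd i)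
    have huIcc : ∀ i, u i ∈ Icc s t := fun i => (humem i).1
    have huG : ∀ i, G (u i) = min (i * δ) (G t) := by
      intro i
      refine le_antisymm ?_ (humem i).2
      have hc0 : 0 ≤ min (i * δ) (G t) := le_min (by positivity) hGtnn
      have hcmem : min (i * δ) (G t) ∈ Icc (G s) (G t) := by
        rw [hGs]; exact ⟨hc0, min_le_right _ _⟩
      obtain ⟨τ₀, hτ₀mem, hτ₀⟩ := intermediate_value_Icc hst hGcont hcmem
      have hle : u i ≤ τ₀ := csInf_le (hSbdd i) ⟨hτ₀mem, hτ₀.ge⟩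
      calc G (u i) ≤ G τ₀ := hGmono _ (huIcc i) _ hτ₀mem hle
        _ = _ := hτ₀
    have humono : ∀ i j : ℕ, i ≤ j → u i ≤ u j := by
      intro i j hij
      refine csInf_le_csInf (hSbdd i) (hSne j) ?_
      intro x hx
      refine ⟨hx.1, le_trans (min_le_min ?_ le_rfl) hx.2⟩
      exact mul_le_mul_of_nonneg_right (by exact_mod_cast Nat.cast_le.2 hij) hδpos.le
    have hu0 : u 0 = s := by
      refine le_antisymm (csInf_le (hSbdd 0) ?_) (huIcc 0).1
      refine ⟨left_mem_Icc.2 hst, ?_⟩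
      simp [hGs, hGtnn]
    have huN : G (u (n + 1)) = G t := by
      rw [huG]
      rw [min_eq_right]
      rw [hδdef]
      push_cast
      have hne : ((n:ℝ) + 1) ≠ 0 := by positivity
      have : ((n:ℝ) + 1) * ((G t + 1) / ((n:ℝ) + 1)) = G t + 1 := by field_simp
      linarith
    -- interval integrability of the integrand between points of Icc
    have fii : ∀ a ∈ Icc s t, ∀ b ∈ Icc s t,
        IntervalIntegrable (fun τ => ζ τ * Real.exp (G τ)) volume a b := by
      intro a ha b hb
      exact (hfi.mono_set (uIcc_subset_Icc ha hb)).intervalIntegrable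
    -- split the integral
    have split : ∀ m : ℕ,
        (∫ τ in s..u m, ζ τ * Real.exp (G τ))
          = ∑ i ∈ Finset.range m, ∫ τ in (u i)..(u (i+1)), ζ τ * Real.exp (G τ) := by
      intro m
      induction m with
      | zero => simp [hu0]
      | succ k ihk =>
        rw [Finset.sum_range_succ, ← ihk]
        exact (integral_add_adjacent_intervals
          (fii s (left_mem_Icc.2 hst) (u k) (huIcc k))
          (fii (u k) (huIcc k) (u (k+1)) (huIcc (k+1)))).symm
    have hδstep : ∀ i : ℕ, G (u (i+1)) - G (u i) ≤ δ := by
      intro i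
      rw [huG, huG]
      push_cast
      rcases le_total ((i:ℝ) * δ) (G t) with hle | hle <;>
        rcases le_total (((i:ℝ) + 1) * δ) (G t) with hle' | hle' <;>
        simp [min_eq_left, min_eq_right, hle, hle'] <;> nlinarith
    calc (∫ τ in s..t, ζ τ * Real.exp (G τ))
        = (∫ τ in s..u (n+1), ζ τ * Real.exp (G τ))
          + ∫ τ in (u (n+1))..t, ζ τ * Real.exp (G τ) :=
          (integral_add_adjacent_intervals
            (fii s (left_mem_Icc.2 hst) _ (huIcc _))
            (fii _ (huIcc _) t (right_mem_Icc.2 hst))).symm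
      _ ≤ (∑ i ∈ Finset.range (n+1), Real.exp δ * (Real.exp (G (u (i+1))) - Real.exp (G (u i))))
          + Real.exp δ * (Real.exp (G t) - Real.exp (G (u (n+1)))) := by
          gcongr ?_ + ?_
          · rw [split (n+1)]
            apply Finset.sum_le_sum
            intro i _
            exact piece δ hδpos.le _ (huIcc i) _ (huIcc (i+1))
              (humono i (i+1) (Nat.le_succ i)) (hδstep i)
          · exact piece δ hδpos.le _ (huIcc _) t (right_mem_Icc.2 hst)
              (huIcc _).2 (by rw [huN]; simpa using hδpos.le)
      _ = Real.exp δ * (Real.exp (G t) - 1) := by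
          rw [← Finset.mul_sum, Finset.sum_range_sub (fun i => Real.exp (G (u i)))]
          rw [hu0, hGs, huN]
          ring_nf
          simp [Real.exp_zero]
          ring
  -- take the limit n → ∞
  have hlim : Tendsto (fun n : ℕ => Real.exp ((G t + 1) / (n + 1)) * (Real.exp (G t) - 1))
      atTop (nhds (Real.exp (G t) - 1)) := by
    have h1 : Tendsto (fun n : ℕ => (G t + 1) / (n + 1)) atTop (nhds 0) := by
      apply Tendsto.div_atTop (tendsto_const_nhds)
      exact tendsto_atTop_add_const_right _ 1 tendsto_natCast_atTop_atTop
    have h2 := (Real.continuous_exp.tendsto 0).comp h1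
    rw [Real.exp_zero] at h2
    simpa using h2.mul_const (Real.exp (G t) - 1)
  exact ge_of_tendsto' hlim main

/-- **Uniform Gronwall Lemma.** Absolute continuity of `β` on `(0,∞)` is encoded by the
fundamental theorem of calculus identity with a locally integrable derivative `β'`. -/
theorem uniform_gronwall_lemma
    (β β' ζ h : ℝ → ℝ)
    (hβnn : ∀ t : ℝ, 0 < t → 0 ≤ β t)
    (hζnn : ∀ t : ℝ, 0 < t → 0 ≤ ζ t)
    (hhnn : ∀ t : ℝ, 0 < t → 0 ≤ h t)
    (hζloc : LocallyIntegrableOn ζ (Set.Ioi 0))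
    (hhloc : LocallyIntegrableOn h (Set.Ioi 0))
    (hβ'loc : LocallyIntegrableOn β' (Set.Ioi 0))
    (hAC : ∀ a b : ℝ, 0 < a → a ≤ b → β b - β a = ∫ τ in a..b, β' τ)
    (hineq : ∀ᵐ t ∂(volume : Measure ℝ), 0 < t → β' t ≤ ζ t * β t + h t)
    (t₁ q A B C : ℝ)
    (ht₁ : 0 < t₁) (hq : 0 < q)
    (hA : 0 ≤ A) (hB : 0 ≤ B) (hC : 0 ≤ C)
    (hζA : ∀ t : ℝ, t₁ < t → (∫ τ in t..(t + q), ζ τ) ≤ A)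
    (hβB : ∀ t : ℝ, t₁ < t → (∫ τ in t..(t + q), β τ) ≤ B)
    (hhC : ∀ t : ℝ, t₁ < t → (∫ τ in t..(t + q), h τ) ≤ C) :
    ∀ t : ℝ, t₁ + q < t → β t ≤ (B / q + C) * Real.exp A := by

  intro t ht
  have hat₁ : t₁ < t - q := by linarith
  have ha0 : (0:ℝ) < t - q := lt_trans ht₁ hat₁
  have hat : t - q ≤ t := by linarith
  -- β is continuous on Icc (t-q) t
  have hIccsub : Icc (t - q) t ⊆ Ioi 0 := fun x hx => lt_of_lt_of_le ha0 hx.1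
  have hβ'i : IntegrableOn β' (Icc (t - q) t) :=
    hβ'loc.integrableOn_compact_subset hIccsub isCompact_Icc
  have hβcont : ContinuousOn β (Icc (t - q) t) := by
    have hc : ContinuousOn (fun x => β (t - q) + ∫ τ in (t - q)..x, β' τ) (Icc (t - q) t) := by
      apply continuousOn_const.add
      have := continuousOn_primitive_interval (a := t - q) (b := t) (f := β') (μ := volume)
        (by rwa [uIcc_of_le hat])
      rwa [uIcc_of_le hat] at this
    apply hc.congr
    intro x hx
    have := hAC (t - q) x ha0 hx.1
    simp only []
    linarith
  -- pick the minimizer s₀ of β on Icc (t-q) t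
  obtain ⟨s₀, hs₀mem, hs₀min⟩ := isCompact_Icc.exists_isMinOn (Set.nonempty_Icc.2 hat) hβcont
  have hs0 : (0:ℝ) < s₀ := lt_of_lt_of_le ha0 hs₀mem.1
  have hst : s₀ ≤ t := hs₀mem.2
  have ht₁s : t₁ < s₀ := lt_of_lt_of_le hat₁ hs₀mem.1
  have htsq : t ≤ s₀ + q := by linarith [hs₀mem.1]
  -- β s₀ ≤ B / q
  have hβi : IntegrableOn β (Icc (t - q) t) := hβcont.integrableOn_Icc
  have hβs₀B : β s₀ ≤ B / q := by
    have h1 : (∫ τ in (t - q)..t, (fun _ => β s₀) τ) ≤ ∫ τ in (t - q)..t, β τ := by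
      apply integral_mono_on hat intervalIntegrable_const
      · exact (hβi.mono_set (by rw [uIcc_of_le hat])).intervalIntegrable
      · intro x hx
        exact isMinOn_iff.1 hs₀min x hx
    have h2 : (∫ τ in (t - q)..t, (fun _ => β s₀) τ) = q * β s₀ := by
      rw [intervalIntegral.integral_const, smul_eq_mul]
      ring
    have h3 : (∫ τ in (t - q)..t, β τ) ≤ B := by
      have := hβB (t - q) hat₁
      rwa [sub_add_cancel] at this
    rw [le_div_iff₀ hq]
    nlinarith
  -- integrability on Icc s₀ (s₀ + q) and Icc s₀ t
  have hsqsub : Icc s₀ (s₀ + q) ⊆ Ioi 0 := fun x hx => lt_of_lt_of_le hs0 hx.1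
  have hstsub : Icc s₀ t ⊆ Ioi 0 := fun x hx => lt_of_lt_of_le hs0 hx.1
  have hζi' : IntegrableOn ζ (Icc s₀ (s₀ + q)) :=
    hζloc.integrableOn_compact_subset hsqsub isCompact_Icc
  have hhi' : IntegrableOn h (Icc s₀ (s₀ + q)) :=
    hhloc.integrableOn_compact_subset hsqsub isCompact_Icc
  have hζi : IntegrableOn ζ (Icc s₀ t) := hζi'.mono_set (Icc_subset_Icc le_rfl htsq)
  have hhi : IntegrableOn h (Icc s₀ t) := hhi'.mono_set (Icc_subset_Icc le_rfl htsq)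
  have hβ'i2 : IntegrableOn β' (Icc s₀ t) := hβ'i.mono_set (Icc_subset_Icc hs₀mem.1 le_rfl)
  have hβconts : ContinuousOn β (Icc s₀ t) := hβcont.mono (Icc_subset_Icc hs₀mem.1 le_rfl)
  have hζβi : IntegrableOn (fun τ => ζ τ * β τ) (Icc s₀ t) :=
    hζi.mul_continuousOn hβconts isCompact_Icc
  have hgi : IntegrableOn (fun τ => ζ τ * β τ + h τ) (Icc s₀ t) := hζβi.add hhi
  -- the functions G and φ
  set G : ℝ → ℝ := fun u => ∫ τ in s₀..u, ζ τ with hGdef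
  set φ : ℝ → ℝ := fun u => β s₀ + ∫ τ in s₀..u, (ζ τ * β τ + h τ) with hφdef
  have iiζ : ∀ u ∈ Icc s₀ t, ∀ v ∈ Icc s₀ t, IntervalIntegrable ζ volume u v :=
    fun u hu v hv => (hζi.mono_set (uIcc_subset_Icc hu hv)).intervalIntegrable
  have hGadd : ∀ u ∈ Icc s₀ t, ∀ v ∈ Icc s₀ t, G v - G u = ∫ τ in u..v, ζ τ := by
    intro u hu v hv
    have := integral_add_adjacent_intervals (iiζ s₀ (left_mem_Icc.2 hst) u hu) (iiζ u hu v hv)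
    simp only [hGdef]
    linarith
  have hGs : G s₀ = 0 := by simp [hGdef]
  have hGmono : ∀ u ∈ Icc s₀ t, ∀ v ∈ Icc s₀ t, u ≤ v → G u ≤ G v := by
    intro u hu v hv huv
    have h1 := hGadd u hu v hv
    have h2 : 0 ≤ ∫ τ in u..v, ζ τ := by
      apply integral_nonneg huv
      intro x hx
      exact hζnn x (hstsub ⟨le_trans hu.1 hx.1, le_trans hx.2 hv.2⟩)
    linarith
  have hGnn : ∀ u ∈ Icc s₀ t, 0 ≤ G u := by
    intro u hu
    have := hGmono s₀ (left_mem_Icc.2 hst) u hu hu.1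
    simpa [hGs] using this
  have hGcont : ContinuousOn G (Icc s₀ t) := by
    have := continuousOn_primitive_interval (a := s₀) (b := t) (f := ζ) (μ := volume)
      (by rwa [uIcc_of_le hst])
    rwa [uIcc_of_le hst] at this
  -- G t ≤ A
  have hGtA : G t ≤ A := by
    have hiζq : IntervalIntegrable ζ volume s₀ (s₀ + q) :=
      (hζi'.mono_set (by rw [uIcc_of_le (by linarith : s₀ ≤ s₀ + q)])).intervalIntegrable
    have hiζ1 : IntervalIntegrable ζ volume s₀ t :=
      (hζi'.mono_set (by rw [uIcc_of_le hst]; exact Icc_subset_Icc le_rfl htsq)).intervalIntegrable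
    have hiζ2 : IntervalIntegrable ζ volume t (s₀ + q) :=
      (hζi'.mono_set (by rw [uIcc_of_le htsq]; exact Icc_subset_Icc (by linarith [hs₀mem.1]) le_rfl)).intervalIntegrable
    have hsplit := integral_add_adjacent_intervals hiζ1 hiζ2
    have hpos : 0 ≤ ∫ τ in t..(s₀ + q), ζ τ := by
      apply integral_nonneg htsq
      intro x hx
      exact hζnn x (hsqsub ⟨le_trans hst hx.1, hx.2⟩)
    have := hζA s₀ ht₁s
    simp only [hGdef]
    linarith
  -- ∫ h over subintervals is ≤ C
  have hhC' : ∀ w ∈ Icc s₀ t, (∫ τ in s₀..w, h τ) ≤ C := by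
    intro w hw
    have hwq : w ≤ s₀ + q := le_trans hw.2 htsq
    have hi1 : IntervalIntegrable h volume s₀ w :=
      (hhi'.mono_set (by rw [uIcc_of_le hw.1]; exact Icc_subset_Icc le_rfl hwq)).intervalIntegrable
    have hi2 : IntervalIntegrable h volume w (s₀ + q) :=
      (hhi'.mono_set (by rw [uIcc_of_le hwq]; exact Icc_subset_Icc hw.1 le_rfl)).intervalIntegrable
    have hsplit := integral_add_adjacent_intervals hi1 hi2
    have hpos : 0 ≤ ∫ τ in w..(s₀ + q), h τ := by
      apply integral_nonneg hwq
      intro x hx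
      exact hhnn x (hsqsub ⟨le_trans hw.1 hx.1, hx.2⟩)
    have := hhC s₀ ht₁s
    linarith
  -- Step A : β ≤ φ on Icc s₀ t
  have hβφ : ∀ w ∈ Icc s₀ t, β w ≤ φ w := by
    intro w hw
    have heq : β w = β s₀ + ∫ τ in s₀..w, β' τ := by
      have := hAC s₀ w hs0 hw.1; linarith
    have hmono : (∫ τ in s₀..w, β' τ) ≤ ∫ τ in s₀..w, (ζ τ * β τ + h τ) := by
      apply integral_mono_ae_restrict hw.1
      · exact (hβ'i2.mono_set (uIcc_subset_Icc (left_mem_Icc.2 hst) hw)).intervalIntegrable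
      · exact (hgi.mono_set (uIcc_subset_Icc (left_mem_Icc.2 hst) hw)).intervalIntegrable
      · filter_upwards [hineq.filter_mono (ae_mono Measure.restrict_le_self),
          ae_restrict_mem measurableSet_Icc] with x hx hmem
        exact hx (lt_of_lt_of_le hs0 hmem.1)
    simp only [hφdef]
    linarith
  -- Step B : maximum of ψ = φ * exp(-G)
  set ψ : ℝ → ℝ := fun u => φ u * Real.exp (-(G u)) with hψdef
  have hφcont : ContinuousOn φ (Icc s₀ t) := by
    apply continuousOn_const.add
    have := continuousOn_primitive_interval (a := s₀) (b := t)
      (f := fun τ => ζ τ * β τ + h τ) (μ := volume) (by rwa [uIcc_of_le hst])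
    rwa [uIcc_of_le hst] at this
  have hψcont : ContinuousOn ψ (Icc s₀ t) :=
    hφcont.mul (Real.continuous_exp.comp_continuousOn hGcont.neg)
  obtain ⟨w, hwmem, hwmax⟩ := isCompact_Icc.exists_isMaxOn (Set.nonempty_Icc.2 hst) hψcont
  set M : ℝ := ψ w with hMdef
  have hφs : φ s₀ = β s₀ := by simp [hφdef]
  have hψs : ψ s₀ = β s₀ := by simp [hψdef, hφs, hGs]
  have hM0 : 0 ≤ M := le_trans (hβnn s₀ hs0) (by rw [← hψs]; exact isMaxOn_iff.1 hwmax s₀ (left_mem_Icc.2 hst))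
  have hφle : ∀ v ∈ Icc s₀ t, φ v ≤ M * Real.exp (G v) := by
    intro v hv
    have h1 : ψ v ≤ M := isMaxOn_iff.1 hwmax v hv
    have h2 : (0:ℝ) < Real.exp (G v) := Real.exp_pos _
    have h3 : φ v = ψ v * Real.exp (G v) := by
      simp only [hψdef, Real.exp_neg]
      field_simp
    rw [h3]
    exact mul_le_mul_of_nonneg_right h1 h2.le
  -- Step D : deduce M ≤ β s₀ + C
  have hφw : φ w = M * Real.exp (G w) := by
    simp only [hMdef, hψdef, Real.exp_neg]
    field_simp
  have hMle : M ≤ β s₀ + C := by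
    have hsw : s₀ ≤ w := hwmem.1
    have hiζβ : IntervalIntegrable (fun τ => ζ τ * β τ) volume s₀ w :=
      (hζβi.mono_set (uIcc_subset_Icc (left_mem_Icc.2 hst) hwmem)).intervalIntegrable
    have hih : IntervalIntegrable h volume s₀ w :=
      (hhi.mono_set (uIcc_subset_Icc (left_mem_Icc.2 hst) hwmem)).intervalIntegrable
    have hsplit : (∫ τ in s₀..w, (ζ τ * β τ + h τ))
        = (∫ τ in s₀..w, ζ τ * β τ) + ∫ τ in s₀..w, h τ :=
      integral_add hiζβ hih
    -- bound ∫ ζ β by M * (exp (G w) - 1)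
    have hcont2 : ContinuousOn (fun τ => M * Real.exp (G τ)) (Icc s₀ t) :=
      continuousOn_const.mul (Real.continuous_exp.comp_continuousOn hGcont)
    have hζeGi : IntegrableOn (fun τ => ζ τ * (M * Real.exp (G τ))) (Icc s₀ t) :=
      hζi.mul_continuousOn hcont2 isCompact_Icc
    have hb1 : (∫ τ in s₀..w, ζ τ * β τ) ≤ ∫ τ in s₀..w, ζ τ * (M * Real.exp (G τ)) := by
      apply integral_mono_on hsw hiζβ
        ((hζeGi.mono_set (uIcc_subset_Icc (left_mem_Icc.2 hst) hwmem)).intervalIntegrable)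
      intro x hx
      have hxm : x ∈ Icc s₀ t := ⟨hx.1, le_trans hx.2 hwmem.2⟩
      have := le_trans (hβφ x hxm) (hφle x hxm)
      exact mul_le_mul_of_nonneg_left this (hζnn x (hstsub hxm))
    have hb2 : (∫ τ in s₀..w, ζ τ * (M * Real.exp (G τ)))
        = M * ∫ τ in s₀..w, ζ τ * Real.exp (G τ) := by
      rw [← intervalIntegral.integral_const_mul]
      apply integral_congr
      intro x _
      ring
    have hkey : (∫ τ in s₀..w, ζ τ * Real.exp (G τ)) ≤ Real.exp (G w) - 1 := by
      have hGw : ∀ τ, (∫ σ in s₀..τ, ζ σ) = G τ := fun τ => rfl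
      have := gronwall_key ζ s₀ w hsw
        (hζi.mono_set (Icc_subset_Icc le_rfl hwmem.2))
        (fun τ hτ => hζnn τ (hstsub ⟨hτ.1, le_trans hτ.2 hwmem.2⟩))
      simpa only [hGw] using this
    have hb3 : M * (∫ τ in s₀..w, ζ τ * Real.exp (G τ)) ≤ M * (Real.exp (G w) - 1) :=
      mul_le_mul_of_nonneg_left hkey hM0
    have hbh : (∫ τ in s₀..w, h τ) ≤ C := hhC' w hwmem
    have : φ w ≤ β s₀ + (M * (Real.exp (G w) - 1) + C) := by
      simp only [hφdef]
      rw [hsplit]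
      have := le_trans hb1 (le_of_eq hb2)
      linarith
    rw [hφw] at this
    linarith
  -- Step E : conclude
  have hβt : β t ≤ φ t := hβφ t (right_mem_Icc.2 hst)
  have h1 : φ t ≤ M * Real.exp (G t) := hφle t (right_mem_Icc.2 hst)
  have h2 : M * Real.exp (G t) ≤ (β s₀ + C) * Real.exp (G t) :=
    mul_le_mul_of_nonneg_right hMle (Real.exp_pos _).le
  have h3 : (β s₀ + C) * Real.exp (G t) ≤ (β s₀ + C) * Real.exp A := by
    apply mul_le_mul_of_nonneg_left (Real.exp_le_exp.2 hGtA)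
    have := hβnn s₀ hs0
    linarith
  have h4 : (β s₀ + C) * Real.exp A ≤ (B / q + C) * Real.exp A := by
    apply mul_le_mul_of_nonneg_right _ (Real.exp_pos _).le
    linarith
  linarith
end

section
/- Let m, c, w₄, D₃ be positive constants and let r : [0,∞) → ℝ be differentiable with r'(t) = r(t)(r(t) − m)(c − w₄·r(t)/D₃) for all t ≥ 0. If r(0) > min(m, c·D₃/w₄), then r(t) → max(m, c·D₃/w₄) as t → ∞. -/
open Set Filter

/-- Persistence of the top predator: for the scalar ODE
`r' = r(r − m)(c − w₄ r/D₃)` with positive parameters, any solution starting above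
`min(m, c D₃/w₄)` tends to `max(m, c D₃/w₄)` as `t → ∞`. -/
theorem top_predator_persistence
    (m c w₄ D₃ : ℝ) (hm : 0 < m) (hc : 0 < c) (hw₄ : 0 < w₄) (hD₃ : 0 < D₃)
    (r : ℝ → ℝ)
    (hode : ∀ t ∈ Set.Ici (0 : ℝ),
      HasDerivWithinAt r (r t * (r t - m) * (c - w₄ * r t / D₃)) (Set.Ici 0) t)
    (h0 : min m (c * D₃ / w₄) < r 0) :
    Filter.Tendsto r Filter.atTop (nhds (max m (c * D₃ / w₄))) := by
  have hw₄' : w₄ ≠ 0 := ne_of_gt hw₄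
  have hD₃' : D₃ ≠ 0 := ne_of_gt hD₃
  set K : ℝ := c * D₃ / w₄ with hKdef
  have hK0 : 0 < K := by rw [hKdef]; positivity
  set M : ℝ := max m K with hMdef
  set μ : ℝ := min m K with hμdef
  have hμ0 : 0 < μ := by rw [hμdef]; exact lt_min hm hK0
  have hμM : μ ≤ M := by rw [hμdef, hMdef]; exact min_le_max
  set F : ℝ → ℝ := fun x => x * (x - m) * (c - w₄ * x / D₃) with hFdef
  have hβ : 0 < w₄ / D₃ := by positivity
  have hode' : ∀ t, 0 ≤ t → HasDerivWithinAt r (F (r t)) (Set.Ici 0) t := by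
    intro t ht
    simpa only [hFdef] using hode t ht
  have hFeq : ∀ x : ℝ, F x = w₄ / D₃ * (x * ((x - m) * (K - x))) := by
    intro x
    rw [hFdef, hKdef]
    field_simp
  have hFpos : ∀ x : ℝ, μ < x → x < M → 0 < F x := by
    intro x h1 h2
    rw [hFeq]
    rcases le_total m K with h | h
    · rw [hμdef, min_eq_left h] at h1
      rw [hMdef, max_eq_right h] at h2
      have hx0 : 0 < x := hm.trans h1
      exact mul_pos hβ (mul_pos hx0 (mul_pos (sub_pos.mpr h1) (sub_pos.mpr h2)))
    · rw [hμdef, min_eq_right h] at h1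
      rw [hMdef, max_eq_left h] at h2
      have hx0 : 0 < x := hK0.trans h1
      exact mul_pos hβ (mul_pos hx0
        (mul_pos_of_neg_of_neg (sub_neg.mpr h2) (sub_neg.mpr h1)))
  have hFneg : ∀ x : ℝ, M < x → F x < 0 := by
    intro x h
    rw [hFeq]
    have h1 : m < x := by
      have : m ≤ M := by rw [hMdef]; exact le_max_left _ _
      exact this.trans_lt h
    have h2 : K < x := by
      have : K ≤ M := by rw [hMdef]; exact le_max_right _ _
      exact this.trans_lt h
    have hx0 : 0 < x := hm.trans h1
    exact mul_neg_of_pos_of_neg hβ (mul_neg_of_pos_of_neg hx0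
      (mul_neg_of_pos_of_neg (sub_pos.mpr h1) (sub_neg.mpr h2)))
  have hFM : F M = 0 := by
    rw [hFeq]
    rcases max_choice m K with h | h <;> rw [hMdef, h] <;> ring
  have hFlip : ∀ B : ℝ, 0 ≤ B → ∀ x : ℝ, |x| ≤ B →
      |F x| ≤ w₄ / D₃ * B * (B + m + K) * |x - M| := by
    intro B hB x hx
    have hx' := abs_le.mp hx
    have hx1 : |x - m| ≤ B + m + K := by
      rw [abs_le]; constructor <;> nlinarith [hK0.le, hm.le]
    have hx2 : |K - x| ≤ B + m + K := by
      rw [abs_le]; constructor <;> nlinarith [hK0.le, hm.le]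
    rcases max_choice m K with h | h
    · have hMm : M = m := by rw [hMdef, h]
      have hfac : F x = w₄ / D₃ * (x * (K - x)) * (x - m) := by rw [hFeq]; ring
      rw [hfac, abs_mul, hMm]
      have h1 : |w₄ / D₃ * (x * (K - x))| ≤ w₄ / D₃ * B * (B + m + K) := by
        rw [abs_mul, abs_mul, abs_of_pos hβ, mul_assoc]
        exact mul_le_mul_of_nonneg_left
          (mul_le_mul hx hx2 (abs_nonneg _) hB) hβ.le
      exact mul_le_mul_of_nonneg_right h1 (abs_nonneg _)
    · have hMK : M = K := by rw [hMdef, h]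
      have hfac : F x = w₄ / D₃ * (x * (x - m)) * (K - x) := by rw [hFeq]; ring
      rw [hfac, abs_mul, hMK, abs_sub_comm x K]
      have h1 : |w₄ / D₃ * (x * (x - m))| ≤ w₄ / D₃ * B * (B + m + K) := by
        rw [abs_mul, abs_mul, abs_of_pos hβ, mul_assoc]
        exact mul_le_mul_of_nonneg_left
          (mul_le_mul hx hx1 (abs_nonneg _) hB) hβ.le
      exact mul_le_mul_of_nonneg_right h1 (abs_nonneg _)
  have hcont : ContinuousOn r (Set.Ici 0) := fun t ht => (hode' t ht).continuousWithinAt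
  have hDeriv : ∀ x : ℝ, 0 < x → HasDerivAt r (F (r x)) x := fun x hx =>
    (hode' x hx.le).hasDerivAt (Ici_mem_nhds hx)
  have hsub : ∀ p q : ℝ, 0 ≤ p → Set.Icc p q ⊆ Set.Ici 0 := fun p q hp =>
    Set.Icc_subset_Ici_self.trans (Set.Ici_subset_Ici.mpr hp)
  have hmono : ∀ p q : ℝ, 0 ≤ p → (∀ t ∈ Set.Ioo p q, 0 ≤ F (r t)) →
      MonotoneOn r (Set.Icc p q) := by
    intro p q hp hpos
    apply monotoneOn_of_deriv_nonneg (convex_Icc p q) (hcont.mono (hsub p q hp))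
    · rw [interior_Icc]
      exact fun x hx => (hDeriv x (hp.trans_lt hx.1)).differentiableAt.differentiableWithinAt
    · rw [interior_Icc]
      intro x hx
      rw [(hDeriv x (hp.trans_lt hx.1)).deriv]
      exact hpos x hx
  have hanti : ∀ p q : ℝ, 0 ≤ p → (∀ t ∈ Set.Ioo p q, F (r t) ≤ 0) →
      AntitoneOn r (Set.Icc p q) := by
    intro p q hp hpos
    apply antitoneOn_of_deriv_nonpos (convex_Icc p q) (hcont.mono (hsub p q hp))
    · rw [interior_Icc]
      exact fun x hx => (hDeriv x (hp.trans_lt hx.1)).differentiableAt.differentiableWithinAt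
    · rw [interior_Icc]
      intro x hx
      rw [(hDeriv x (hp.trans_lt hx.1)).deriv]
      exact hpos x hx
  -- upper invariance
  have hupper : ∀ t, 0 ≤ t → r t ≤ max (r 0) M := by
    intro t₁ ht₁
    by_contra hgt
    push_neg at hgt
    set b := max (r 0) M with hbdef
    have hMb : M ≤ b := le_max_right _ _
    have hScomp : IsCompact (Set.Icc 0 t₁ ∩ r ⁻¹' Set.Iic b) :=
      isCompact_Icc.of_isClosed_subset
        ((hcont.mono (hsub 0 t₁ le_rfl)).preimage_isClosed_of_isClosed isClosed_Icc isClosed_Iic)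
        Set.inter_subset_left
    have hSne : (Set.Icc 0 t₁ ∩ r ⁻¹' Set.Iic b).Nonempty :=
      ⟨0, ⟨le_refl 0, ht₁⟩, show r 0 ≤ b from le_max_left _ _⟩
    obtain ⟨s, hsS, hsmax⟩ : ∃ s, s ∈ Set.Icc 0 t₁ ∩ r ⁻¹' Set.Iic b ∧
        ∀ x ∈ Set.Icc 0 t₁ ∩ r ⁻¹' Set.Iic b, x ≤ s :=
      ⟨_, hScomp.sSup_mem hSne, fun x hx => le_csSup hScomp.bddAbove hx⟩
    have hs0 : 0 ≤ s := hsS.1.1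
    have hslt : s < t₁ := lt_of_le_of_ne hsS.1.2 (by
      rintro rfl
      exact absurd hsS.2 (not_le.mpr hgt))
    have hafter : ∀ x, s < x → x ≤ t₁ → b < r x := by
      intro x hx1 hx2
      by_contra hle
      push_neg at hle
      exact absurd (hsmax x ⟨⟨hs0.trans hx1.le, hx2⟩, hle⟩) (not_le.mpr hx1)
    have hrs : r s = b := by
      refine le_antisymm hsS.2 ?_
      by_contra hlt
      push_neg at hlt
      have hct : Filter.Tendsto r (nhdsWithin s (Set.Ioc s t₁)) (nhds (r s)) :=
        (hcont s hs0).mono_left (nhdsWithin_mono s fun x hx => hs0.trans hx.1.le)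
      have hev : ∀ᶠ x in nhdsWithin s (Set.Ioc s t₁), r x < b := hct.eventually_lt_const hlt
      have hne : (nhdsWithin s (Set.Ioc s t₁)).NeBot := by
        rw [← mem_closure_iff_nhdsWithin_neBot, closure_Ioc hslt.ne]
        exact ⟨le_refl s, hslt.le⟩
      obtain ⟨x, hx1, hx2⟩ := (hev.and self_mem_nhdsWithin).exists
      exact absurd hx1 (not_lt.mpr (hafter x hx2.1 hx2.2).le)
    have hneg : ∀ x ∈ Set.Ioo s t₁, F (r x) ≤ 0 := fun x hx =>
      (hFneg (r x) (hMb.trans_lt (hafter x hx.1 hx.2.le))).le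
    have hle := hanti s t₁ hs0 hneg (Set.left_mem_Icc.mpr hslt.le)
      (Set.right_mem_Icc.mpr hslt.le) hslt.le
    rw [hrs] at hle
    exact absurd hle (not_le.mpr hgt)
  -- lower invariance
  have hlower : ∀ t, 0 ≤ t → min (r 0) M ≤ r t := by
    intro t₁ ht₁
    by_contra hgt
    push_neg at hgt
    set a := min (r 0) M with hadef
    have haM : a ≤ M := min_le_right _ _
    have hScomp : IsCompact (Set.Icc 0 t₁ ∩ r ⁻¹' Set.Ici a) :=
      isCompact_Icc.of_isClosed_subset
        ((hcont.mono (hsub 0 t₁ le_rfl)).preimage_isClosed_of_isClosed isClosed_Icc isClosed_Ici)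
        Set.inter_subset_left
    have hSne : (Set.Icc 0 t₁ ∩ r ⁻¹' Set.Ici a).Nonempty :=
      ⟨0, ⟨le_refl 0, ht₁⟩, show a ≤ r 0 from min_le_left _ _⟩
    obtain ⟨s, hsS, hsmax⟩ : ∃ s, s ∈ Set.Icc 0 t₁ ∩ r ⁻¹' Set.Ici a ∧
        ∀ x ∈ Set.Icc 0 t₁ ∩ r ⁻¹' Set.Ici a, x ≤ s :=
      ⟨_, hScomp.sSup_mem hSne, fun x hx => le_csSup hScomp.bddAbove hx⟩
    have hs0 : 0 ≤ s := hsS.1.1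
    have hslt : s < t₁ := lt_of_le_of_ne hsS.1.2 (by
      rintro rfl
      exact absurd hsS.2 (not_le.mpr hgt))
    have hafter : ∀ x, s < x → x ≤ t₁ → r x < a := by
      intro x hx1 hx2
      by_contra hle
      push_neg at hle
      exact absurd (hsmax x ⟨⟨hs0.trans hx1.le, hx2⟩, hle⟩) (not_le.mpr hx1)
    have hrs : r s = a := by
      refine le_antisymm ?_ hsS.2
      by_contra hlt
      push_neg at hlt
      have hct : Filter.Tendsto r (nhdsWithin s (Set.Ioc s t₁)) (nhds (r s)) :=
        (hcont s hs0).mono_left (nhdsWithin_mono s fun x hx => hs0.trans hx.1.le)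
      have hev : ∀ᶠ x in nhdsWithin s (Set.Ioc s t₁), a < r x := hct.eventually_const_lt hlt
      have hne : (nhdsWithin s (Set.Ioc s t₁)).NeBot := by
        rw [← mem_closure_iff_nhdsWithin_neBot, closure_Ioc hslt.ne]
        exact ⟨le_refl s, hslt.le⟩
      obtain ⟨x, hx1, hx2⟩ := (hev.and self_mem_nhdsWithin).exists
      exact absurd hx1 (not_lt.mpr (hafter x hx2.1 hx2.2).le)
    rcases le_or_gt M (r 0) with hMr | hrM
    · -- a = M : Gronwall uniqueness at the equilibrium M
      have haM' : a = M := by rw [hadef, min_eq_right hMr]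
      obtain ⟨B, hB⟩ := (isCompact_Icc (a := s) (b := t₁)).exists_bound_of_continuousOn
        (hcont.mono (hsub s t₁ hs0))
      have hB0 : 0 ≤ B := (norm_nonneg _).trans (hB s (Set.left_mem_Icc.mpr hslt.le))
      have key := norm_le_gronwallBound_of_norm_deriv_right_le
        (f := fun t => r t - M) (f' := fun t => F (r t)) (δ := 0) (ε := 0)
        (K := w₄ / D₃ * B * (B + m + K)) (a := s) (b := t₁)
        ((hcont.mono (hsub s t₁ hs0)).sub continuousOn_const)
        (fun x hx => ((hode' x (hs0.trans hx.1)).mono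
          (Set.Ici_subset_Ici.mpr (hs0.trans hx.1))).sub_const M)
        (by show ‖r s - M‖ ≤ (0:ℝ); rw [hrs, haM', sub_self, norm_zero])
        (by
          intro x hx
          show ‖F (r x)‖ ≤ w₄ / D₃ * B * (B + m + K) * ‖r x - M‖ + 0
          rw [Real.norm_eq_abs, Real.norm_eq_abs, add_zero]
          have hBx : |r x| ≤ B := by
            rw [← Real.norm_eq_abs]
            exact hB x ⟨hx.1, hx.2.le⟩
          exact hFlip B hB0 (r x) hBx)
      have h1 := key t₁ (Set.right_mem_Icc.mpr hslt.le)
      simp only [gronwallBound_ε0_δ0, Real.norm_eq_abs] at h1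
      have h2 : r t₁ - M = 0 := abs_eq_zero.mp (le_antisymm h1 (abs_nonneg _))
      have h3 : r t₁ = M := by linarith
      exact absurd hgt (not_lt.mpr (le_of_eq (haM'.trans h3.symm)))
    · -- a = r 0 > μ
      have haR : a = r 0 := by rw [hadef, min_eq_left hrM.le]
      have hμa : μ < a := by rw [haR]; exact h0
      rcases (Set.Icc s t₁ ∩ r ⁻¹' Set.Iic μ).eq_empty_or_nonempty with hTe | hTne
      · have hpos : ∀ x ∈ Set.Ioo s t₁, 0 ≤ F (r x) := by
          intro x hx
          have hxμ : μ < r x := by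
            by_contra hh
            push_neg at hh
            exact Set.eq_empty_iff_forall_notMem.mp hTe x ⟨⟨hx.1.le, hx.2.le⟩, hh⟩
          exact (hFpos (r x) hxμ ((hafter x hx.1 hx.2.le).trans_le haM)).le
        have hle := hmono s t₁ hs0 hpos (Set.left_mem_Icc.mpr hslt.le)
          (Set.right_mem_Icc.mpr hslt.le) hslt.le
        rw [hrs] at hle
        exact absurd hle (not_le.mpr hgt)
      · have hTcomp : IsCompact (Set.Icc s t₁ ∩ r ⁻¹' Set.Iic μ) :=
          isCompact_Icc.of_isClosed_subset
            ((hcont.mono (hsub s t₁ hs0)).preimage_isClosed_of_isClosed isClosed_Icc isClosed_Iic)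
            Set.inter_subset_left
        obtain ⟨u, huT, humin⟩ : ∃ u, u ∈ Set.Icc s t₁ ∩ r ⁻¹' Set.Iic μ ∧
            ∀ x ∈ Set.Icc s t₁ ∩ r ⁻¹' Set.Iic μ, u ≤ x :=
          ⟨_, hTcomp.sInf_mem hTne, fun x hx => csInf_le hTcomp.bddBelow hx⟩
        have hut : u ≤ t₁ := huT.1.2
        have hμs : μ < r s := by rw [hrs]; exact hμa
        have hsu : s < u := lt_of_le_of_ne huT.1.1 (by
          rintro rfl
          exact absurd huT.2 (not_le.mpr hμs))
        have hbefore : ∀ x, s ≤ x → x < u → μ < r x := by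
          intro x hx1 hx2
          by_contra hh
          push_neg at hh
          exact absurd (humin x ⟨⟨hx1, hx2.le.trans hut⟩, hh⟩) (not_le.mpr hx2)
        have hpos : ∀ x ∈ Set.Ioo s u, 0 ≤ F (r x) := by
          intro x hx
          exact (hFpos (r x) (hbefore x hx.1.le hx.2)
            ((hafter x hx.1 (hx.2.le.trans hut)).trans_le haM)).le
        have hle := hmono s u hs0 hpos (Set.left_mem_Icc.mpr hsu.le)
          (Set.right_mem_Icc.mpr hsu.le) hsu.le
        rw [hrs] at hle
        exact absurd huT.2 (not_le.mpr (hμa.trans_le hle))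
  -- convergence
  have hFcont : Continuous F := by
    rw [hFdef]
    exact (continuous_id.mul (continuous_id.sub continuous_const)).mul
      (continuous_const.sub ((continuous_const.mul continuous_id).div_const D₃))
  rcases le_or_gt (r 0) M with hle | hgt2
  · -- increasing case
    have hinv : ∀ t, 0 ≤ t → r 0 ≤ r t ∧ r t ≤ M := by
      intro t ht
      constructor
      · have := hlower t ht; rwa [min_eq_left hle] at this
      · have := hupper t ht; rwa [max_eq_right hle] at this
    have hFpos' : ∀ x : ℝ, 0 < x → 0 ≤ F (r x) := by
      intro x hx
      rcases lt_or_eq_of_le (hinv x hx.le).2 with h | h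
      · exact (hFpos _ (h0.trans_le (hinv x hx.le).1) h).le
      · rw [h, hFM]
    have hMono : MonotoneOn r (Set.Ici 0) := by
      apply monotoneOn_of_deriv_nonneg (convex_Ici 0) hcont
      · rw [interior_Ici]
        exact fun x hx => (hDeriv x hx).differentiableAt.differentiableWithinAt
      · rw [interior_Ici]
        intro x hx
        rw [(hDeriv x hx).deriv]
        exact hFpos' x hx
    rw [tendsto_order]
    constructor
    · intro l hl
      rcases lt_or_ge l (r 0) with h | h
      · filter_upwards [eventually_ge_atTop (0 : ℝ)] with t ht
        exact h.trans_le (hinv t ht).1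
      · have hex : ∃ t₀, 0 ≤ t₀ ∧ l < r t₀ := by
          by_contra hna
          push_neg at hna
          obtain ⟨x₀, hx₀mem, hx₀min⟩ := isCompact_Icc.exists_isMinOn
            ⟨r 0, le_refl _, h⟩ hFcont.continuousOn
          have hδ0 : 0 < F x₀ := hFpos x₀ (h0.trans_le hx₀mem.1) (hx₀mem.2.trans_lt hl)
          obtain ⟨δ, hδ0, hδmin⟩ : ∃ δ : ℝ, 0 < δ ∧ ∀ y ∈ Set.Icc (r 0) l, δ ≤ F y :=
            ⟨F x₀, hδ0, fun y hy => isMinOn_iff.mp hx₀min y hy⟩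
          obtain ⟨T₀, hT0, hδT⟩ : ∃ T₀ : ℝ, 0 < T₀ ∧ δ * T₀ = (l - r 0) + δ := by
            refine ⟨(l - r 0) / δ + 1, ?_, ?_⟩
            · have : 0 ≤ (l - r 0) / δ := div_nonneg (by linarith) hδ0.le
              linarith
            · field_simp
          have hg : MonotoneOn (fun t => r t - δ * t) (Set.Icc 0 T₀) := by
            apply monotoneOn_of_deriv_nonneg (convex_Icc 0 T₀)
              ((hcont.mono (hsub 0 T₀ le_rfl)).sub
                ((continuous_const.mul continuous_id).continuousOn))
            · rw [interior_Icc]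
              intro x hx
              exact ((hDeriv x hx.1).sub
                ((hasDerivAt_id x).const_mul δ)).differentiableAt.differentiableWithinAt
            · rw [interior_Icc]
              intro x hx
              rw [show deriv (r - (fun x => δ) * id) x = F (r x) - δ * 1 from
                ((hDeriv x hx.1).sub ((hasDerivAt_id x).const_mul δ)).deriv]
              have hrmem : r x ∈ Set.Icc (r 0) l := ⟨(hinv x hx.1.le).1, hna x hx.1.le⟩
              have := hδmin (r x) hrmem
              simp only [mul_one]
              linarith
          have hcomp := hg (Set.left_mem_Icc.mpr hT0.le) (Set.right_mem_Icc.mpr hT0.le) hT0.le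
          have := hna T₀ hT0.le
          simp only [mul_zero, sub_zero] at hcomp
          linarith
        obtain ⟨t₀, ht₀, hlt₀⟩ := hex
        filter_upwards [eventually_ge_atTop t₀] with t ht
        exact hlt₀.trans_le (hMono ht₀ (ht₀.trans ht) ht)
    · intro u hu
      filter_upwards [eventually_ge_atTop (0 : ℝ)] with t ht
      exact (hinv t ht).2.trans_lt hu
  · -- decreasing case
    have hinv : ∀ t, 0 ≤ t → M ≤ r t ∧ r t ≤ r 0 := by
      intro t ht
      constructor
      · have := hlower t ht; rwa [min_eq_right hgt2.le] at this
      · have := hupper t ht; rwa [max_eq_left hgt2.le] at this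
    have hFneg' : ∀ x : ℝ, 0 < x → F (r x) ≤ 0 := by
      intro x hx
      rcases lt_or_eq_of_le (hinv x hx.le).1 with h | h
      · exact (hFneg _ h).le
      · rw [← h, hFM]
    have hAnti : AntitoneOn r (Set.Ici 0) := by
      apply antitoneOn_of_deriv_nonpos (convex_Ici 0) hcont
      · rw [interior_Ici]
        exact fun x hx => (hDeriv x hx).differentiableAt.differentiableWithinAt
      · rw [interior_Ici]
        intro x hx
        rw [(hDeriv x hx).deriv]
        exact hFneg' x hx
    rw [tendsto_order]
    constructor
    · intro l hl
      filter_upwards [eventually_ge_atTop (0 : ℝ)] with t ht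
      exact hl.trans_le (hinv t ht).1
    · intro u hu
      rcases lt_or_ge (r 0) u with h | h
      · filter_upwards [eventually_ge_atTop (0 : ℝ)] with t ht
        exact (hinv t ht).2.trans_lt h
      · have hex : ∃ t₀, 0 ≤ t₀ ∧ r t₀ < u := by
          by_contra hna
          push_neg at hna
          obtain ⟨x₀, hx₀mem, hx₀max⟩ := isCompact_Icc.exists_isMaxOn
            ⟨u, le_refl _, h⟩ hFcont.continuousOn
          have hδ0 : F x₀ < 0 := hFneg x₀ (hu.trans_le hx₀mem.1)
          obtain ⟨δ, hδ0', hδmax⟩ : ∃ δ : ℝ, 0 < δ ∧ ∀ y ∈ Set.Icc u (r 0), F y ≤ -δ :=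
            ⟨-F x₀, by linarith, fun y hy => by
              have := isMaxOn_iff.mp hx₀max y hy
              linarith⟩
          obtain ⟨T₀, hT0, hδT⟩ : ∃ T₀ : ℝ, 0 < T₀ ∧ δ * T₀ = (r 0 - u) + δ := by
            refine ⟨(r 0 - u) / δ + 1, ?_, ?_⟩
            · have : 0 ≤ (r 0 - u) / δ := div_nonneg (by linarith) hδ0'.le
              linarith
            · field_simp
          have hg : AntitoneOn (fun t => r t + δ * t) (Set.Icc 0 T₀) := by
            apply antitoneOn_of_deriv_nonpos (convex_Icc 0 T₀)
              ((hcont.mono (hsub 0 T₀ le_rfl)).add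
                ((continuous_const.mul continuous_id).continuousOn))
            · rw [interior_Icc]
              intro x hx
              exact ((hDeriv x hx.1).add
                ((hasDerivAt_id x).const_mul δ)).differentiableAt.differentiableWithinAt
            · rw [interior_Icc]
              intro x hx
              rw [show deriv (r + (fun x => δ) * id) x = F (r x) + δ * 1 from
                ((hDeriv x hx.1).add ((hasDerivAt_id x).const_mul δ)).deriv]
              have hrmem : r x ∈ Set.Icc u (r 0) := ⟨hna x hx.1.le, (hinv x hx.1.le).2⟩
              have := hδmax (r x) hrmem
              simp only [mul_one]
              linarith
          have hcomp := hg (Set.left_mem_Icc.mpr hT0.le) (Set.right_mem_Icc.mpr hT0.le) hT0.le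
          have := hna T₀ hT0.le
          simp only [mul_zero, add_zero] at hcomp
          linarith
        obtain ⟨t₀, ht₀, hlt₀⟩ := hex
        filter_upwards [eventually_ge_atTop t₀] with t ht
        exact (hAnti ht₀ (ht₀.trans ht) ht).trans_lt hlt₀
end

section
/- Let c, w₄, D₃ be positive constants and let r : [0,∞) → ℝ be differentiable with r'(t) = r(t)²·(c − w₄·r(t)/D₃) for all t ≥ 0. If r(0) > 0, then r(t) → c·D₃/w₄ as t → ∞. -/
open Set Filter Topology

private lemma fsign_le' (c w₄ D₃ : ℝ) (hw₄ : 0 < w₄) (hD₃ : 0 < D₃) {x : ℝ}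
    (hx : x ≤ c * D₃ / w₄) : 0 ≤ x ^ 2 * (c - w₄ * x / D₃) := by
  have h1 : w₄ * x / D₃ ≤ c := by
    rw [div_le_iff₀ hD₃]
    calc w₄ * x ≤ w₄ * (c * D₃ / w₄) := mul_le_mul_of_nonneg_left hx hw₄.le
      _ = c * D₃ := by field_simp
  exact mul_nonneg (sq_nonneg x) (by linarith)

private lemma fsign_ge' (c w₄ D₃ : ℝ) (hw₄ : 0 < w₄) (hD₃ : 0 < D₃) {x : ℝ}
    (hx : c * D₃ / w₄ ≤ x) : x ^ 2 * (c - w₄ * x / D₃) ≤ 0 := by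
  have h1 : c ≤ w₄ * x / D₃ := by
    rw [le_div_iff₀ hD₃]
    calc c * D₃ = w₄ * (c * D₃ / w₄) := by field_simp
      _ ≤ w₄ * x := mul_le_mul_of_nonneg_left hx hw₄.le
  exact mul_nonpos_iff.2 (Or.inl ⟨sq_nonneg x, by linarith⟩)

/-- A barrier below the equilibrium is never crossed downwards. -/
private lemma barrier_down (c w₄ D₃ : ℝ) (hw₄ : 0 < w₄) (hD₃ : 0 < D₃)
    (r : ℝ → ℝ)
    (hode : ∀ t ∈ Set.Ici (0 : ℝ),
      HasDerivWithinAt r ((r t) ^ 2 * (c - w₄ * r t / D₃)) (Set.Ici 0) t)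
    (b : ℝ) (hbK : b ≤ c * D₃ / w₄) (hb0 : b ≤ r 0) :
    ∀ t, 0 ≤ t → b ≤ r t := by
  have hcont : ContinuousOn r (Set.Ici 0) := fun t ht => (hode t ht).continuousWithinAt
  have hderiv : ∀ t : ℝ, 0 < t → HasDerivAt r ((r t) ^ 2 * (c - w₄ * r t / D₃)) t :=
    fun t ht => (hode t ht.le).hasDerivAt (Ici_mem_nhds ht)
  intro t₂ ht₂
  by_contra hcon
  push_neg at hcon
  set S : Set ℝ := {t ∈ Set.Icc 0 t₂ | b ≤ r t} with hS
  have hSsub : S ⊆ Set.Icc 0 t₂ := fun x hx => hx.1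
  have hSne : S.Nonempty := ⟨0, ⟨le_rfl, ht₂⟩, hb0⟩
  have hSbdd : BddAbove S := BddAbove.mono hSsub bddAbove_Icc
  have hScl : IsClosed S := by
    have hEq : S = Set.Icc 0 t₂ ∩ r ⁻¹' Set.Ici b := by
      ext x; simp [hS, Set.mem_sep_iff, Set.mem_preimage]
    rw [hEq]
    exact (hcont.mono (Set.Icc_subset_Ici_self)).preimage_isClosed_of_isClosed
      isClosed_Icc isClosed_Ici
  have hScomp : IsCompact S := isCompact_Icc.of_isClosed_subset hScl hSsub
  have ht₃S : sSup S ∈ S := hScomp.sSup_mem hSne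
  set t₃ := sSup S with ht₃def
  obtain ⟨⟨h0t₃, ht₃2⟩, hrt₃⟩ := ht₃S
  have hmid : ∀ t ∈ Set.Ioc t₃ t₂, r t < b := by
    intro t ht
    by_contra h
    push_neg at h
    have htS : t ∈ S := ⟨⟨le_trans h0t₃ ht.1.le, ht.2⟩, h⟩
    exact absurd (le_csSup hSbdd htS) (not_le.2 ht.1)
  have hsub : Set.Icc t₃ t₂ ⊆ Set.Ici (0 : ℝ) := fun x hx => le_trans h0t₃ hx.1
  have hmono : MonotoneOn r (Set.Icc t₃ t₂) := by
    apply monotoneOn_of_deriv_nonneg (convex_Icc _ _) (hcont.mono hsub)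
    · intro t ht
      rw [interior_Icc] at ht
      exact ((hderiv t (lt_of_le_of_lt h0t₃ ht.1)).differentiableAt).differentiableWithinAt
    · intro t ht
      rw [interior_Icc] at ht
      rw [(hderiv t (lt_of_le_of_lt h0t₃ ht.1)).deriv]
      exact fsign_le' c w₄ D₃ hw₄ hD₃
        (le_trans (hmid t ⟨ht.1, ht.2.le⟩).le hbK)
  have := hmono (Set.left_mem_Icc.2 ht₃2) (Set.right_mem_Icc.2 ht₃2) ht₃2
  linarith

/-- The equilibrium is never crossed upwards. -/
private lemma barrier_up (c w₄ D₃ : ℝ) (hw₄ : 0 < w₄) (hD₃ : 0 < D₃)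
    (r : ℝ → ℝ)
    (hode : ∀ t ∈ Set.Ici (0 : ℝ),
      HasDerivWithinAt r ((r t) ^ 2 * (c - w₄ * r t / D₃)) (Set.Ici 0) t)
    (hb0 : r 0 ≤ c * D₃ / w₄) :
    ∀ t, 0 ≤ t → r t ≤ c * D₃ / w₄ := by
  have hcont : ContinuousOn r (Set.Ici 0) := fun t ht => (hode t ht).continuousWithinAt
  have hderiv : ∀ t : ℝ, 0 < t → HasDerivAt r ((r t) ^ 2 * (c - w₄ * r t / D₃)) t :=
    fun t ht => (hode t ht.le).hasDerivAt (Ici_mem_nhds ht)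
  intro t₂ ht₂
  by_contra hcon
  push_neg at hcon
  set S : Set ℝ := {t ∈ Set.Icc 0 t₂ | r t ≤ c * D₃ / w₄} with hS
  have hSsub : S ⊆ Set.Icc 0 t₂ := fun x hx => hx.1
  have hSne : S.Nonempty := ⟨0, ⟨le_rfl, ht₂⟩, hb0⟩
  have hSbdd : BddAbove S := BddAbove.mono hSsub bddAbove_Icc
  have hScl : IsClosed S := by
    have hEq : S = Set.Icc 0 t₂ ∩ r ⁻¹' Set.Iic (c * D₃ / w₄) := by
      ext x; simp [hS, Set.mem_sep_iff, Set.mem_preimage]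
    rw [hEq]
    exact (hcont.mono (Set.Icc_subset_Ici_self)).preimage_isClosed_of_isClosed
      isClosed_Icc isClosed_Iic
  have hScomp : IsCompact S := isCompact_Icc.of_isClosed_subset hScl hSsub
  have ht₃S : sSup S ∈ S := hScomp.sSup_mem hSne
  set t₃ := sSup S with ht₃def
  obtain ⟨⟨h0t₃, ht₃2⟩, hrt₃⟩ := ht₃S
  have hmid : ∀ t ∈ Set.Ioc t₃ t₂, c * D₃ / w₄ < r t := by
    intro t ht
    by_contra h
    push_neg at h
    have htS : t ∈ S := ⟨⟨le_trans h0t₃ ht.1.le, ht.2⟩, h⟩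
    exact absurd (le_csSup hSbdd htS) (not_le.2 ht.1)
  have hsub : Set.Icc t₃ t₂ ⊆ Set.Ici (0 : ℝ) := fun x hx => le_trans h0t₃ hx.1
  have hanti : AntitoneOn r (Set.Icc t₃ t₂) := by
    apply antitoneOn_of_deriv_nonpos (convex_Icc _ _) (hcont.mono hsub)
    · intro t ht
      rw [interior_Icc] at ht
      exact ((hderiv t (lt_of_le_of_lt h0t₃ ht.1)).differentiableAt).differentiableWithinAt
    · intro t ht
      rw [interior_Icc] at ht
      rw [(hderiv t (lt_of_le_of_lt h0t₃ ht.1)).deriv]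
      exact fsign_ge' c w₄ D₃ hw₄ hD₃ (hmid t ⟨ht.1, ht.2.le⟩).le
  have := hanti (Set.left_mem_Icc.2 ht₃2) (Set.right_mem_Icc.2 ht₃2) ht₃2
  linarith

/-- Without an Allee effect (`m = 0`) the top predator always persists: for the scalar ODE
`r' = r²(c − w₄ r/D₃)` with positive parameters, any solution with positive initial value
tends to `c D₃/w₄` as `t → ∞`. -/
theorem top_predator_persistence_no_allee
    (c w₄ D₃ : ℝ) (hc : 0 < c) (hw₄ : 0 < w₄) (hD₃ : 0 < D₃)
    (r : ℝ → ℝ)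
    (hode : ∀ t ∈ Set.Ici (0 : ℝ),
      HasDerivWithinAt r ((r t) ^ 2 * (c - w₄ * r t / D₃)) (Set.Ici 0) t)
    (h0 : 0 < r 0) :
    Filter.Tendsto r Filter.atTop (nhds (c * D₃ / w₄)) := by
  set K := c * D₃ / w₄ with hKdef
  have hKpos : 0 < K := by positivity
  have hcont : ContinuousOn r (Set.Ici 0) := fun t ht => (hode t ht).continuousWithinAt
  have hderiv : ∀ t : ℝ, 0 < t → HasDerivAt r ((r t) ^ 2 * (c - w₄ * r t / D₃)) t :=
    fun t ht => (hode t ht.le).hasDerivAt (Ici_mem_nhds ht)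
  -- the truncated solution
  set s : ℝ → ℝ := fun t => r (max t 0) with hsdef
  have hseq : s =ᶠ[atTop] r := by
    filter_upwards [eventually_ge_atTop (0:ℝ)] with t ht
    simp [hsdef, max_eq_left ht]
  have hq : w₄ * K = c * D₃ := by rw [hKdef]; field_simp
  rcases le_or_gt (r 0) K with h1 | h1
  · -- initial value below (or at) the equilibrium
    have hub : ∀ t, 0 ≤ t → r t ≤ K := barrier_up c w₄ D₃ hw₄ hD₃ r hode h1
    have hlb0 : ∀ t, 0 ≤ t → 0 ≤ r t := barrier_down c w₄ D₃ hw₄ hD₃ r hode 0 hKpos.le h0.le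
    have hmono : MonotoneOn r (Set.Ici 0) := by
      apply monotoneOn_of_deriv_nonneg (convex_Ici _) hcont
      · intro t ht
        rw [interior_Ici] at ht
        exact ((hderiv t ht).differentiableAt).differentiableWithinAt
      · intro t ht
        rw [interior_Ici] at ht
        rw [(hderiv t ht).deriv]
        exact fsign_le' c w₄ D₃ hw₄ hD₃ (hub t ht.le)
    have hsmono : Monotone s := fun a b hab =>
      hmono (Set.mem_Ici.2 (le_max_right a 0)) (Set.mem_Ici.2 (le_max_right b 0))
        (max_le_max hab le_rfl)
    have hsbdd : BddAbove (Set.range s) := by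
      refine ⟨K, ?_⟩
      rintro x ⟨t, rfl⟩
      exact hub _ (le_max_right t 0)
    have hL : Tendsto s atTop (𝓝 (⨆ t, s t)) := tendsto_atTop_ciSup hsmono hsbdd
    set L := ⨆ t, s t with hLdef
    have hsleL : ∀ t, s t ≤ L := fun t => le_ciSup hsbdd t
    have hr0L : r 0 ≤ L := by
      have := hsleL 0
      simpa [hsdef] using this
    have hLK : L ≤ K := ciSup_le fun t => hub _ (le_max_right t 0)
    have hLeq : L = K := by
      by_contra hne
      have hLlt : L < K := lt_of_le_of_ne hLK hne
      set δ := (r 0) ^ 2 * (c - w₄ * L / D₃) with hδdef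
      have hcL : 0 < c - w₄ * L / D₃ := by
        rw [sub_pos, div_lt_iff₀ hD₃]
        calc w₄ * L < w₄ * K := by nlinarith
          _ = c * D₃ := hq
      have hδ : 0 < δ := by positivity
      have hrub : ∀ t, 0 ≤ t → r t ≤ L := by
        intro t ht
        have := hsleL t
        simpa [hsdef, max_eq_left ht] using this
      have hfr : ∀ t, 0 < t → δ ≤ (r t) ^ 2 * (c - w₄ * r t / D₃) := by
        intro t ht
        have hx1 : r 0 ≤ r t := hmono (Set.mem_Ici.2 le_rfl) (Set.mem_Ici.2 ht.le) ht.le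
        have hx2 : r t ≤ L := hrub t ht.le
        have hc2 : c - w₄ * L / D₃ ≤ c - w₄ * r t / D₃ := by
          have : w₄ * r t / D₃ ≤ w₄ * L / D₃ :=
            (div_le_div_iff_of_pos_right hD₃).2 (mul_le_mul_of_nonneg_left hx2 hw₄.le)
          linarith
        calc δ = (r 0) ^ 2 * (c - w₄ * L / D₃) := rfl
          _ ≤ (r t) ^ 2 * (c - w₄ * L / D₃) :=
              mul_le_mul_of_nonneg_right (by nlinarith) hcL.le
          _ ≤ (r t) ^ 2 * (c - w₄ * r t / D₃) :=
              mul_le_mul_of_nonneg_left hc2 (sq_nonneg _)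
      -- the auxiliary function g t = r t - δ t is monotone on [0, ∞)
      have hgc : ContinuousOn (fun t : ℝ => r t - δ * t) (Set.Ici 0) :=
        hcont.sub ((continuous_const.mul continuous_id).continuousOn)
      have hgmono : MonotoneOn (fun t : ℝ => r t - δ * t) (Set.Ici 0) := by
        apply monotoneOn_of_deriv_nonneg (convex_Ici _) hgc
        · intro t ht
          rw [interior_Ici] at ht
          exact (((hderiv t ht).sub ((hasDerivAt_id t).const_mul δ)).differentiableAt).differentiableWithinAt
        · intro t ht
          rw [interior_Ici] at ht
          have hd : HasDerivAt (fun t => r t - δ * t)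
              ((r t) ^ 2 * (c - w₄ * r t / D₃) - δ * 1) t :=
            (hderiv t ht).sub ((hasDerivAt_id t).const_mul δ)
          rw [hd.deriv]
          have := hfr t ht
          linarith
      have hbound : ∀ T, 0 ≤ T → δ * T ≤ L - r 0 := by
        intro T hT
        have h := hgmono (Set.mem_Ici.2 le_rfl) (Set.mem_Ici.2 hT) hT
        simp only at h
        have := hrub T hT
        linarith
      have hfin := hbound ((L - r 0 + 1) / δ) (div_nonneg (by linarith) hδ.le)
      have hmul : δ * ((L - r 0 + 1) / δ) = L - r 0 + 1 := by field_simp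
      linarith
    rw [show (nhds (c * D₃ / w₄)) = 𝓝 L by rw [hLeq]]
    exact hL.congr' hseq
  · -- initial value above the equilibrium
    have hlb : ∀ t, 0 ≤ t → K ≤ r t := barrier_down c w₄ D₃ hw₄ hD₃ r hode K le_rfl h1.le
    have hanti : AntitoneOn r (Set.Ici 0) := by
      apply antitoneOn_of_deriv_nonpos (convex_Ici _) hcont
      · intro t ht
        rw [interior_Ici] at ht
        exact ((hderiv t ht).differentiableAt).differentiableWithinAt
      · intro t ht
        rw [interior_Ici] at ht
        rw [(hderiv t ht).deriv]
        exact fsign_ge' c w₄ D₃ hw₄ hD₃ (hlb t ht.le)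
    have hsanti : Antitone s := fun a b hab =>
      hanti (Set.mem_Ici.2 (le_max_right a 0)) (Set.mem_Ici.2 (le_max_right b 0))
        (max_le_max hab le_rfl)
    have hsbdd : BddBelow (Set.range s) := by
      refine ⟨K, ?_⟩
      rintro x ⟨t, rfl⟩
      exact hlb _ (le_max_right t 0)
    have hL : Tendsto s atTop (𝓝 (⨅ t, s t)) := tendsto_atTop_ciInf hsanti hsbdd
    set L := ⨅ t, s t with hLdef
    have hsgeL : ∀ t, L ≤ s t := fun t => ciInf_le hsbdd t
    have hKL : K ≤ L := le_ciInf fun t => hlb _ (le_max_right t 0)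
    have hLeq : L = K := by
      by_contra hne
      have hLgt : K < L := lt_of_le_of_ne hKL (Ne.symm hne)
      set δ := L ^ 2 * (w₄ * L / D₃ - c) with hδdef
      have hcL : 0 < w₄ * L / D₃ - c := by
        rw [sub_pos, lt_div_iff₀ hD₃]
        calc c * D₃ = w₄ * K := hq.symm
          _ < w₄ * L := by nlinarith
      have hLpos : 0 < L := lt_trans hKpos hLgt
      have hδ : 0 < δ := by positivity
      have hrlb : ∀ t, 0 ≤ t → L ≤ r t := by
        intro t ht
        have := hsgeL t
        simpa [hsdef, max_eq_left ht] using this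
      have hrub : ∀ t, 0 ≤ t → r t ≤ r 0 :=
        fun t ht => hanti (Set.mem_Ici.2 le_rfl) (Set.mem_Ici.2 ht) ht
      have hfr : ∀ t, 0 < t → (r t) ^ 2 * (c - w₄ * r t / D₃) ≤ -δ := by
        intro t ht
        have hx1 : L ≤ r t := hrlb t ht.le
        have hc2 : c - w₄ * r t / D₃ ≤ c - w₄ * L / D₃ := by
          have : w₄ * L / D₃ ≤ w₄ * r t / D₃ :=
            (div_le_div_iff_of_pos_right hD₃).2 (mul_le_mul_of_nonneg_left hx1 hw₄.le)
          linarith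
        have hc3 : c - w₄ * r t / D₃ ≤ -(w₄ * L / D₃ - c) := by linarith
        calc (r t) ^ 2 * (c - w₄ * r t / D₃)
            ≤ (r t) ^ 2 * (-(w₄ * L / D₃ - c)) :=
              mul_le_mul_of_nonneg_left hc3 (sq_nonneg _)
          _ ≤ L ^ 2 * (-(w₄ * L / D₃ - c)) :=
              mul_le_mul_of_nonpos_right (by nlinarith) (by linarith)
          _ = -δ := by ring
      have hgc : ContinuousOn (fun t : ℝ => r t + δ * t) (Set.Ici 0) :=
        hcont.add ((continuous_const.mul continuous_id).continuousOn)
      have hganti : AntitoneOn (fun t : ℝ => r t + δ * t) (Set.Ici 0) := by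
        apply antitoneOn_of_deriv_nonpos (convex_Ici _) hgc
        · intro t ht
          rw [interior_Ici] at ht
          exact (((hderiv t ht).add ((hasDerivAt_id t).const_mul δ)).differentiableAt).differentiableWithinAt
        · intro t ht
          rw [interior_Ici] at ht
          have hd : HasDerivAt (fun t => r t + δ * t)
              ((r t) ^ 2 * (c - w₄ * r t / D₃) + δ * 1) t :=
            (hderiv t ht).add ((hasDerivAt_id t).const_mul δ)
          rw [hd.deriv]
          have := hfr t ht
          linarith
      have hr0ge : L ≤ r 0 := hrlb 0 le_rfl
      have hbound : ∀ T, 0 ≤ T → δ * T ≤ r 0 - L := by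
        intro T hT
        have h := hganti (Set.mem_Ici.2 le_rfl) (Set.mem_Ici.2 hT) hT
        simp only at h
        have := hrlb T hT
        linarith
      have hfin := hbound ((r 0 - L + 1) / δ) (div_nonneg (by linarith) hδ.le)
      have hmul : δ * ((r 0 - L + 1) / δ) = r 0 - L + 1 := by field_simp
      linarith
    rw [show (nhds (c * D₃ / w₄)) = 𝓝 L by rw [hLeq]]
    exact hL.congr' hseq
end
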